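/- Let P and Q be probability mass functions on a common finite nonempty set A, with P and Q strictly positive on A, let P_min = min_{a ∈ A} P(a), Q_min = min_{a ∈ A} Q(a), ε = Σ_{a ∈ A} |P(a) − Q(a)|, and let α ∈ (0,1). Then the Rényi divergence of order α (in nats) satisfies D_α(P‖Q) ≤ (α/(1−α))·( ln(1 + ε²/(2·P_min)) − (Q_min/2)·ε² ). -/

import Mathlib

open Finset

namespace RenyiTV

noncomputable def fd (t : ℝ) : ℝ := t - 1 - Real.log t
noncomputable def gg (x : ℝ) : ℝ := (x-1)^2/(x*(x+1))
noncomputable def hh (m : ℝ) : ℝ := Real.log m + 1/m - 1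

lemma fd_nonneg {t : ℝ} (ht : 0 < t) : 0 ≤ fd t := by
  have := Real.log_le_sub_one_of_pos ht
  unfold fd; linarith

lemma gg_nonneg {x : ℝ} (hx : 0 < x) : 0 ≤ gg x := by
  unfold gg; positivity

lemma hh_nonneg {m : ℝ} (hm : 1 ≤ m) : 0 ≤ hh m := by
  have hm0 : (0:ℝ) < m := by linarith
  have h := Real.log_le_sub_one_of_pos (show (0:ℝ) < 1/m by positivity)
  rw [Real.log_div one_ne_zero (ne_of_gt hm0), Real.log_one] at h
  unfold hh; linarith

/-- Padé bound: `2(y-1)/(y+1) ≤ log y` for `y ≥ 1`. -/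
lemma pade {y : ℝ} (hy : 1 ≤ y) : 2*(y-1)/(y+1) ≤ Real.log y := by
  have key : ∀ z ∈ Set.Ici (1:ℝ), (fun z : ℝ => Real.log z + 4/(z+1)) 1 ≤
      (fun z : ℝ => Real.log z + 4/(z+1)) z := by
    intro z hz
    have hmono : MonotoneOn (fun z : ℝ => Real.log z + 4/(z+1)) (Set.Ici 1) := by
      have hder : ∀ z ∈ interior (Set.Ici (1:ℝ)),
          HasDerivAt (fun z : ℝ => Real.log z + 4/(z+1)) (1/z - 4/(z+1)^2) z := by
        intro z hz
        rw [interior_Ici] at hz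
        have hz1 : (1:ℝ) < z := hz
        have hz0 : z ≠ 0 := by linarith
        have hz1' : z + 1 ≠ 0 := by linarith
        have h1 : HasDerivAt (fun z : ℝ => z + 1) 1 z := (hasDerivAt_id z).add_const 1
        have h2 : HasDerivAt (fun z : ℝ => 4/(z+1)) (4 * (-1/(z+1)^2)) z := by
          have h4 := (h1.inv hz1').const_mul (4:ℝ)
          simpa [div_eq_mul_inv] using h4
        have h3 : HasDerivAt (fun z : ℝ => Real.log z + 4/(z+1)) (z⁻¹ + 4 * (-1/(z+1)^2)) z :=
          (Real.hasDerivAt_log hz0).add h2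
        convert h3 using 1
        rw [one_div]; ring
      apply monotoneOn_of_deriv_nonneg (convex_Ici 1)
      · apply ContinuousOn.add
        · exact Real.continuousOn_log.mono (fun z hz => by
            simp only [Set.mem_compl_iff, Set.mem_singleton_iff]
            have : (1:ℝ) ≤ z := hz
            intro h; rw [h] at this; linarith)
        · apply ContinuousOn.div continuousOn_const (by fun_prop)
          intro z hz
          have : (1:ℝ) ≤ z := hz
          intro h; nlinarith [h]
      · intro z hz
        exact (hder z hz).differentiableAt.differentiableWithinAt
      · intro z hz
        rw [(hder z hz).deriv]
        rw [interior_Ici] at hz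
        have hz1 : (1:ℝ) < z := hz
        rw [sub_nonneg, div_le_div_iff₀ (by positivity) (by positivity)]
        nlinarith [sq_nonneg (z-1)]
    exact hmono (by norm_num) hz hz
  have h := key y hy
  simp only [Real.log_one] at h
  have hy1 : (0:ℝ) < y + 1 := by linarith
  have heq : 2*(y-1)/(y+1) = 2 - 4/(y+1) := by field_simp; ring
  norm_num at h
  linarith [h]



/-- `log u ≤ (u - 1/u)/2` for `u ≥ 1` (via `sinh`). -/
lemma log_le_half {u : ℝ} (hu : 1 ≤ u) : Real.log u ≤ (u - 1/u)/2 := by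
  have hu0 : (0:ℝ) < u := by linarith
  have h1 : Real.log u ≤ Real.sinh (Real.log u) :=
    (Real.self_le_sinh_iff).2 (Real.log_nonneg hu)
  have h2 : Real.sinh (Real.log u) = (u - 1/u)/2 := by
    rw [Real.sinh_eq, Real.exp_log hu0, Real.exp_neg, Real.exp_log hu0]
    rw [one_div]
  linarith [h1, h2.le, h2.ge]

/-- `gg u ≤ fd u` for `u ≥ 1`. -/
lemma gg_le_fd {u : ℝ} (hu : 1 ≤ u) : gg u ≤ fd u := by
  have hu0 : (0:ℝ) < u := by linarith
  have h1 := log_le_half hu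
  have h2 : gg u ≤ (u-1)^2/(2*u) := by
    unfold gg
    apply div_le_div_of_nonneg_left (by positivity) (by positivity) (by nlinarith)
  have h3 : (u-1)^2/(2*u) ≤ fd u := by
    unfold fd
    have : (u-1)^2/(2*u) = u - 1 - (u - 1/u)/2 := by field_simp; ring
    linarith
  linarith

/-- `gg m ≤ hh m` for `m ≥ 1`. -/
lemma gg_le_hh {m : ℝ} (hm : 1 ≤ m) : gg m ≤ hh m := by
  have hm0 : (0:ℝ) < m := by linarith
  have h := pade hm
  unfold gg hh
  have key : (m-1)^2/(m*(m+1)) + 1 - 1/m = 2*(m-1)/(m+1) := by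
    field_simp; ring
  linarith

/-- `gg` is monotone on `[1, ∞)`. -/
lemma gg_mono {x y : ℝ} (hx : 1 ≤ x) (hxy : x ≤ y) : gg x ≤ gg y := by
  have hx0 : (0:ℝ) < x := by linarith
  have hy0 : (0:ℝ) < y := by linarith
  unfold gg
  rw [div_le_div_iff₀ (by positivity) (by positivity)]
  nlinarith [mul_nonneg (mul_nonneg (sub_nonneg.2 hxy) (sub_nonneg.2 hx)) (sub_nonneg.2 (hx.trans hxy)), sq_nonneg (x-1), sq_nonneg (y-1), mul_pos hx0 hy0]

/-- Low-side lemma: for `0 < x ≤ 1 ≤ m` and `0 < s ≤ x`: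
`s * gg x + hh m ≤ fd (x/m)`. -/
lemma plow {x m s : ℝ} (hx0 : 0 < x) (hx1 : x ≤ 1) (hm : 1 ≤ m)
    (hs0 : 0 < s) (hsx : s ≤ x) : s * gg x + hh m ≤ fd (x/m) := by
  have hm0 : (0:ℝ) < m := by linarith
  have hxm : (0:ℝ) < x/m := by positivity
  have hlog : Real.log (x/m) = Real.log x - Real.log m :=
    Real.log_div (ne_of_gt hx0) (ne_of_gt hm0)
  -- -log x ≥ 2(1-x)/(1+x)
  have hpade : 2*(1/x-1)/(1/x+1) ≤ Real.log (1/x) := pade (by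
    rw [le_div_iff₀ hx0]; linarith)
  have hlx : Real.log (1/x) = - Real.log x := by
    rw [one_div, Real.log_inv]
  have hq : 2*(1/x-1)/(1/x+1) = 2*(1-x)/(1+x) := by
    rw [div_eq_div_iff (by positivity) (by positivity)]
    field_simp
  have hlogx : 2*(1-x)/(1+x) ≤ - Real.log x := by
    rw [hq] at hpade; rw [hlx] at hpade; exact hpade
  -- s * gg x ≤ x * gg x = (1-x)^2/(1+x)
  have hggnn : 0 ≤ gg x := gg_nonneg hx0
  have hsgg : s * gg x ≤ (1-x)^2/(1+x) := by
    have h1 : s * gg x ≤ x * gg x := mul_le_mul_of_nonneg_right hsx hggnn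
    have h2 : x * gg x = (1-x)^2/(1+x) := by
      unfold gg; field_simp; ring
    linarith
  -- (x-1)/m ≥ x-1
  have h1m : m⁻¹ ≤ 1 := by
    rw [inv_le_one_iff₀]; right; exact hm
  have hxm1 : x - 1 ≤ (x-1)/m := by
    rw [div_eq_mul_inv]
    nlinarith [mul_nonneg (sub_nonneg.2 hx1) (sub_nonneg.2 h1m)]
  have hsplit : x/m = (x-1)/m + 1/m := by
    rw [← add_div]; ring_nf
  unfold fd hh
  rw [hlog]
  have hfin : (1-x)^2/(1+x) - 2*(1-x)/(1+x) = x - 1 := by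
    field_simp; ring
  linarith [hsgg, hlogx, hxm1]


set_option maxHeartbeats 4000000 in
/-- Certificate: the key polynomial inequality underlying subadditivity of `sqrt ∘ gg`. -/
lemma sg_cert {a b : ℝ} (ha : 0 ≤ a) (hb : 0 ≤ b) :
    (((a+1)*(b+1)-1)^2*((a+1)*(a+2))*((b+1)*(b+2))
      - a^2*((b+1)*(b+2))*(((a+1)*(b+1))*((a+1)*(b+1)+1))
      - b^2*((a+1)*(a+2))*(((a+1)*(b+1))*((a+1)*(b+1)+1)))^2
    ≤ 4*(a^2)*(b^2)*((a+1)*(a+2))*((b+1)*(b+2))*(((a+1)*(b+1))*((a+1)*(b+1)+1))^2 := by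
  have key : 4*(a^2)*(b^2)*((a+1)*(a+2))*((b+1)*(b+2))*(((a+1)*(b+1))*((a+1)*(b+1)+1))^2
      - (((a+1)*(b+1)-1)^2*((a+1)*(a+2))*((b+1)*(b+2))
      - a^2*((b+1)*(b+2))*(((a+1)*(b+1))*((a+1)*(b+1)+1))
      - b^2*((a+1)*(a+2))*(((a+1)*(b+1))*((a+1)*(b+1)+1)))^2 = (64*a^2*b^3 + 236*a^2*b^4 + 336*a^2*b^5 + 228*a^2*b^6 + 72*a^2*b^7 + 8*a^2*b^8 + 64*a^3*b^2 + 552*a^3*b^3 + 1520*a^3*b^4 + 1944*a^3*b^5 + 1260*a^3*b^6 + 392*a^3*b^7 + 44*a^3*b^8 + 236*a^4*b^2 + 1520*a^4*b^3 + 3704*a^4*b^4 + 4464*a^4*b^5 + 2815*a^4*b^6 + 870*a^4*b^7 + 99*a^4*b^8 + 336*a^5*b^2 + 1944*a^5*b^3 + 4464*a^5*b^4 + 5210*a^5*b^5 + 3240*a^5*b^6 + 1002*a^5*b^7 + 116*a^5*b^8 + 228*a^6*b^2 + 1260*a^6*b^3 + 2815*a^6*b^4 + 3240*a^6*b^5 +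 2009*a^6*b^6 + 626*a^6*b^7 + 74*a^6*b^8 + 72*a^7*b^2 + 392*a^7*b^3 + 870*a^7*b^4 + 1002*a^7*b^5 + 626*a^7*b^6 + 198*a^7*b^7 + 24*a^7*b^8 + 8*a^8*b^2 + 44*a^8*b^3 + 99*a^8*b^4 + 116*a^8*b^5 + 74*a^8*b^6 + 24*a^8*b^7 + 3*a^8*b^8) := by
    ring
  have hE : (0:ℝ) ≤ (64*a^2*b^3 + 236*a^2*b^4 + 336*a^2*b^5 + 228*a^2*b^6 + 72*a^2*b^7 + 8*a^2*b^8 + 64*a^3*b^2 + 552*a^3*b^3 + 1520*a^3*b^4 + 1944*a^3*b^5 + 1260*a^3*b^6 + 392*a^3*b^7 + 44*a^3*b^8 + 236*a^4*b^2 + 1520*a^4*b^3 + 3704*a^4*b^4 + 4464*a^4*b^5 + 2815*a^4*b^6 + 870*a^4*b^7 + 99*a^4*b^8 + 336*a^5*b^2 + 1944*a^5*b^3 + 4464*a^5*b^4 + 5210*a^5*b^5 + 3240*a^5*b^6 + 1002*a^5*b^7 + 116*a^5*b^8 + 228*a^6*b^2 + 1260*a^6*b^3 + 2815*a^6*b^4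 + 3240*a^6*b^5 + 2009*a^6*b^6 + 626*a^6*b^7 + 74*a^6*b^8 + 72*a^7*b^2 + 392*a^7*b^3 + 870*a^7*b^4 + 1002*a^7*b^5 + 626*a^7*b^6 + 198*a^7*b^7 + 24*a^7*b^8 + 8*a^8*b^2 + 44*a^8*b^3 + 99*a^8*b^4 + 116*a^8*b^5 + 74*a^8*b^6 + 24*a^8*b^7 + 3*a^8*b^8) := by
    repeat' apply add_nonneg
    all_goals exact mul_nonneg (mul_nonneg (by norm_num) (pow_nonneg ha _)) (pow_nonneg hb _)
  linarith

/-- Subadditivity: `sqrt (gg (u*v)) ≤ sqrt (gg u) + sqrt (gg v)` for `u, v ≥ 1`. -/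
lemma sg {u v : ℝ} (hu : 1 ≤ u) (hv : 1 ≤ v) :
    Real.sqrt (gg (u*v)) ≤ Real.sqrt (gg u) + Real.sqrt (gg v) := by
  have hu0 : (0:ℝ) < u := by linarith
  have hv0 : (0:ℝ) < v := by linarith
  have hggun : 0 ≤ gg u := gg_nonneg hu0
  have hggvn : 0 ≤ gg v := gg_nonneg hv0
  set a := u - 1 with hadef
  set b := v - 1 with hbdef
  have ha : 0 ≤ a := by rw [hadef]; linarith
  have hb : 0 ≤ b := by rw [hbdef]; linarith
  have hu1 : u = a + 1 := by rw [hadef]; ring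
  have hv1 : v = b + 1 := by rw [hbdef]; ring
  set U : ℝ := (a+1)*(a+2) with hU
  set V : ℝ := (b+1)*(b+2) with hV
  set W : ℝ := ((a+1)*(b+1))*((a+1)*(b+1)+1) with hW
  have hUpos : 0 < U := by rw [hU]; nlinarith
  have hVpos : 0 < V := by rw [hV]; nlinarith
  have hWpos : 0 < W := by
    rw [hW]
    have h1 : 0 < (a+1)*(b+1) := mul_pos (by linarith) (by linarith)
    nlinarith
  set N : ℝ := ((a+1)*(b+1)-1)^2*U*V - a^2*V*W - b^2*U*W with hN
  have hggu : gg u = a^2/U := by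
    unfold gg; rw [hu1, hU]; try ring_nf
  have hggv : gg v = b^2/V := by
    unfold gg; rw [hv1, hV]; try ring_nf
  have hgguv : gg (u*v) = ((a+1)*(b+1)-1)^2/W := by
    unfold gg; rw [hu1, hv1, hW]; try ring_nf
  have hcert : N^2 ≤ 4*(a^2)*(b^2)*U*V*W^2 := by
    rw [hN, hU, hV, hW]; exact sg_cert ha hb
  have hMn : 0 ≤ Real.sqrt (gg u * gg v) := Real.sqrt_nonneg _
  have hM2 : (Real.sqrt (gg u * gg v))^2 = a^2*b^2/(U*V) := by
    rw [Real.sq_sqrt (mul_nonneg hggun hggvn), hggu, hggv]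
    rw [div_mul_div_comm]
  have hfrac2 : (N/(U*V*W))^2 ≤ (2*Real.sqrt (gg u * gg v))^2 := by
    rw [div_pow]
    have h2 : (2*Real.sqrt (gg u * gg v))^2 = 4*(a^2*b^2/(U*V)) := by
      rw [mul_pow, hM2]; ring
    rw [h2, div_le_iff₀ (by positivity)]
    have expand : 4*(a^2*b^2/(U*V))*(U*V*W)^2 = 4*a^2*b^2*U*V*W^2 := by
      field_simp
    rw [expand]
    exact hcert
  have habs : N/(U*V*W) ≤ 2*Real.sqrt (gg u * gg v) := by
    have h1 := Real.sqrt_le_sqrt hfrac2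
    rw [Real.sqrt_sq_eq_abs, Real.sqrt_sq_eq_abs] at h1
    calc N/(U*V*W) ≤ |N/(U*V*W)| := le_abs_self _
      _ ≤ |2*Real.sqrt (gg u * gg v)| := h1
      _ = 2*Real.sqrt (gg u * gg v) := abs_of_nonneg (by positivity)
  have hsum2 : (Real.sqrt (gg u) + Real.sqrt (gg v))^2
      = gg u + gg v + 2*Real.sqrt (gg u * gg v) := by
    rw [add_sq, Real.sq_sqrt hggun, Real.sq_sqrt hggvn, Real.sqrt_mul hggun]
    ring
  have hdiff : gg (u*v) - gg u - gg v = N/(U*V*W) := by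
    rw [hgguv, hggu, hggv, hN]
    field_simp
  have hfin : gg (u*v) ≤ (Real.sqrt (gg u) + Real.sqrt (gg v))^2 := by
    linarith [habs, hdiff, hsum2]
  calc Real.sqrt (gg (u*v)) ≤ Real.sqrt ((Real.sqrt (gg u) + Real.sqrt (gg v))^2) :=
        Real.sqrt_le_sqrt hfin
    _ = Real.sqrt (gg u) + Real.sqrt (gg v) := Real.sqrt_sq (by positivity)


/-- MPC: for `x > m ≥ 1`: `sqrt (gg x) ≤ sqrt (fd (x/m)) + sqrt (hh m)`. -/
lemma mpc {x m : ℝ} (hm : 1 ≤ m) (hmx : m < x) :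
    Real.sqrt (gg x) ≤ Real.sqrt (fd (x/m)) + Real.sqrt (hh m) := by
  have hm0 : (0:ℝ) < m := by linarith
  have hu : 1 ≤ x/m := by rw [le_div_iff₀ hm0]; linarith
  have hxeq : x = (x/m) * m := by field_simp
  calc Real.sqrt (gg x) = Real.sqrt (gg ((x/m)*m)) := by rw [← hxeq]
    _ ≤ Real.sqrt (gg (x/m)) + Real.sqrt (gg m) := sg hu hm
    _ ≤ Real.sqrt (fd (x/m)) + Real.sqrt (hh m) := by
        gcongr
        · exact gg_le_fd hu
        · exact gg_le_hh hm

/-- High-side lemma: for `x > 1`, `m ≥ 1`, `0 < s < 1`: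
`s * gg x - s * hh m / (1-s) ≤ fd (x/m)`. -/
lemma phigh {x m s : ℝ} (hx : 1 < x) (hm : 1 ≤ m) (hs0 : 0 < s) (hs1 : s < 1) :
    s * gg x - s * hh m / (1-s) ≤ fd (x/m) := by
  have hm0 : (0:ℝ) < m := by linarith
  have hx0 : (0:ℝ) < x := by linarith
  have h1s : (0:ℝ) < 1 - s := by linarith
  have hhn : 0 ≤ hh m := hh_nonneg hm
  have hfdn : 0 ≤ fd (x/m) := fd_nonneg (by positivity)
  rcases le_or_gt x m with hxm | hmx
  · -- x ≤ m : gg x ≤ gg m ≤ hh m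
    have h1 : gg x ≤ hh m := (gg_mono hx.le hxm).trans (gg_le_hh hm)
    have h2 : s * hh m ≤ s * hh m / (1-s) := by
      rw [le_div_iff₀ h1s]
      nlinarith [mul_nonneg hs0.le hhn]
    nlinarith [mul_le_mul_of_nonneg_left h1 hs0.le]
  · -- x > m : use mpc
    have hmpc := mpc hm hmx
    set F := fd (x/m) with hF
    set G := gg x with hG
    set H := hh m with hH
    have hGn : 0 ≤ G := gg_nonneg hx0
    have e1 : (Real.sqrt F)^2 = F := Real.sq_sqrt hfdn
    have e2 : (Real.sqrt H)^2 = H := Real.sq_sqrt hhn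
    have hGle : G ≤ (Real.sqrt F + Real.sqrt H)^2 := by
      have := Real.sqrt_le_sqrt (le_refl G)
      calc G = (Real.sqrt G)^2 := (Real.sq_sqrt hGn).symm
        _ ≤ (Real.sqrt F + Real.sqrt H)^2 := by
            apply pow_le_pow_left₀ (Real.sqrt_nonneg _) hmpc
    -- (1-s)*F - s*(1-s)*G + s*H ≥ 0
    have key : 0 ≤ (1-s)*F - s*(1-s)*G + s*H := by
      nlinarith [sq_nonneg (s*Real.sqrt H - (1-s)*Real.sqrt F),
        mul_le_mul_of_nonneg_left hGle (mul_nonneg hs0.le h1s.le),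
        Real.sqrt_nonneg F, Real.sqrt_nonneg H]
    have hdiv : ((1-s)*F - s*(1-s)*G + s*H)/(1-s) = F - s*G + s*H/(1-s) := by
      field_simp
    have := div_nonneg key h1s.le
    rw [hdiv] at this
    linarith


/-- Claim T: `KL(Q‖P) + s·Δ(P,Q) ≤ log (∑ Q²/P)` where `s = min Q`. -/
lemma claimT {A : Type*} [Fintype A] [Nonempty A] (P Q : A → ℝ)
    (hP : ∀ a, 0 < P a) (hPsum : ∑ a, P a = 1)
    (hQ : ∀ a, 0 < Q a) (hQsum : ∑ a, Q a = 1)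
    (s : ℝ) (hs0 : 0 < s) (hsle : ∀ a, s ≤ Q a) :
    ∑ a, Q a * Real.log (Q a / P a) + s * ∑ a, (P a - Q a)^2/(P a + Q a)
      ≤ Real.log (∑ a, (Q a)^2 / P a) := by
  classical
  set m := ∑ a, (Q a)^2/P a with hmdef
  have hPle1 : ∀ a, P a ≤ 1 := by
    intro a
    rw [← hPsum]
    exact Finset.single_le_sum (fun i _ => (hP i).le) (Finset.mem_univ a)
  have hm1 : (1:ℝ) ≤ m := by
    have hid : ∀ a ∈ Finset.univ, (Q a - P a)^2/P a = (Q a)^2/P a - (2*Q a - P a) := by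
      intro a _
      have := (hP a).ne'
      field_simp
      ring
    have h0 : (0:ℝ) ≤ ∑ a, (Q a - P a)^2/P a :=
      Finset.sum_nonneg (fun a _ => div_nonneg (sq_nonneg _) (hP a).le)
    rw [Finset.sum_congr rfl hid, Finset.sum_sub_distrib, Finset.sum_sub_distrib,
      ← Finset.mul_sum, hQsum, hPsum] at h0
    rw [hmdef]
    linarith
  have hm0 : (0:ℝ) < m := by linarith
  have hhn : 0 ≤ hh m := hh_nonneg hm1
  -- key identity
  have hkey : ∑ a, Q a * fd (Q a / P a / m)
      = Real.log m - ∑ a, Q a * Real.log (Q a / P a) := by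
    have expand : ∀ a ∈ Finset.univ, Q a * fd (Q a / P a / m)
        = (Q a)^2/P a/m - Q a + (Q a * Real.log m - Q a * Real.log (Q a / P a)) := by
      intro a _
      unfold fd
      rw [Real.log_div (ne_of_gt (div_pos (hQ a) (hP a))) (ne_of_gt hm0)]
      ring
    rw [Finset.sum_congr rfl expand, Finset.sum_add_distrib, Finset.sum_sub_distrib,
      Finset.sum_sub_distrib, ← Finset.sum_div, ← Finset.sum_mul, hQsum, ← hmdef,
      div_self (ne_of_gt hm0), one_mul]
    ring
  -- per-atom identity for the Δ term
  have hgid : ∀ a ∈ Finset.univ, (P a - Q a)^2/(P a + Q a) = Q a * gg (Q a / P a) := by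
    intro a _
    unfold gg
    have h1 : P a ≠ 0 := (hP a).ne'
    have h2 : Q a ≠ 0 := (hQ a).ne'
    have h3 : P a + Q a ≠ 0 := ne_of_gt (by linarith [hP a, hQ a])
    have hd : 0 < Q a / P a := div_pos (hQ a) (hP a)
    have h4 : 0 < (Q a / P a) * ((Q a / P a) + 1) := by nlinarith
    rw [eq_comm, mul_div_assoc', div_eq_div_iff (ne_of_gt h4) h3]
    field_simp
    ring
  rw [Finset.sum_congr rfl hgid]
  -- split into L and H
  set L := Finset.univ.filter (fun a => Q a ≤ P a) with hLdef
  set Hs := Finset.univ.filter (fun a => ¬ Q a ≤ P a) with hHdef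
  have hLne : L.Nonempty := by
    by_contra hemp
    rw [Finset.not_nonempty_iff_eq_empty, Finset.filter_eq_empty_iff] at hemp
    have hlt : ∀ a ∈ Finset.univ, P a < Q a := fun a ha => not_le.mp (hemp ha)
    have := Finset.sum_lt_sum_of_nonempty Finset.univ_nonempty hlt
    rw [hPsum, hQsum] at this
    exact lt_irrefl 1 this
  obtain ⟨b, hbL⟩ := hLne
  have hQLs : s ≤ ∑ a ∈ L, Q a :=
    le_trans (hsle b) (Finset.single_le_sum (f := Q) (fun i _ => (hQ i).le) hbL)
  have hsplitQ : ∑ a ∈ L, Q a + ∑ a ∈ Hs, Q a = 1 := by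
    rw [hLdef, hHdef, Finset.sum_filter_add_sum_filter_not Finset.univ _ Q]
    exact hQsum
  have hQHle : ∑ a ∈ Hs, Q a ≤ 1 - s := by linarith
  have hsplitFD : ∑ a ∈ L, Q a * fd (Q a / P a / m) + ∑ a ∈ Hs, Q a * fd (Q a / P a / m)
      = ∑ a, Q a * fd (Q a / P a / m) := by
    rw [hLdef, hHdef, Finset.sum_filter_add_sum_filter_not]
  have hsplitG : ∑ a ∈ L, Q a * gg (Q a / P a) + ∑ a ∈ Hs, Q a * gg (Q a / P a)
      = ∑ a, Q a * gg (Q a / P a) := by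
    rw [hLdef, hHdef, Finset.sum_filter_add_sum_filter_not]
  -- low bound
  have hlow : ∀ a ∈ L, s * (Q a * gg (Q a / P a)) + Q a * hh m
      ≤ Q a * fd (Q a / P a / m) := by
    intro a haL
    have hax : Q a ≤ P a := (Finset.mem_filter.mp haL).2
    have hx0 : 0 < Q a / P a := div_pos (hQ a) (hP a)
    have hx1 : Q a / P a ≤ 1 := by rw [div_le_one (hP a)]; exact hax
    have hsx : s ≤ Q a / P a := by
      refine le_trans (hsle a) ?_
      rw [le_div_iff₀ (hP a)]
      nlinarith [hPle1 a, hQ a]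
    have h := plow hx0 hx1 hm1 hs0 hsx
    calc s * (Q a * gg (Q a / P a)) + Q a * hh m
        = Q a * (s * gg (Q a / P a) + hh m) := by ring
      _ ≤ Q a * fd (Q a / P a / m) := mul_le_mul_of_nonneg_left h (hQ a).le
  have hsumL : s * ∑ a ∈ L, Q a * gg (Q a / P a) + (∑ a ∈ L, Q a) * hh m
      ≤ ∑ a ∈ L, Q a * fd (Q a / P a / m) := by
    have := Finset.sum_le_sum hlow
    rw [Finset.sum_add_distrib, ← Finset.mul_sum, ← Finset.sum_mul] at this
    exact this
  by_cases hHne : Hs.Nonempty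
  · -- H nonempty: s < 1
    obtain ⟨c, hcH⟩ := hHne
    have hcx : P c < Q c := not_le.mp (Finset.mem_filter.mp hcH).2
    have hbx : Q b ≤ P b := (Finset.mem_filter.mp hbL).2
    have hcb : c ≠ b := by
      intro h
      rw [h] at hcx
      exact absurd hbx (not_le.mpr hcx)
    have hQcb : Q c + Q b ≤ 1 := by
      rw [← hQsum]
      have hsub : ({c, b} : Finset A) ⊆ Finset.univ := Finset.subset_univ _
      have := Finset.sum_le_sum_of_subset_of_nonneg hsub
        (fun i _ _ => (hQ i).le)
      rwa [Finset.sum_pair hcb] at this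
    have hs1 : s < 1 := by
      have := hsle b
      have := hQ c
      linarith
    have h1s : (0:ℝ) < 1 - s := by linarith
    have hhigh : ∀ a ∈ Hs, s * (Q a * gg (Q a / P a)) - Q a * (s * hh m / (1-s))
        ≤ Q a * fd (Q a / P a / m) := by
      intro a haH
      have hax : P a < Q a := not_le.mp (Finset.mem_filter.mp haH).2
      have hx1 : 1 < Q a / P a := by rw [lt_div_iff₀ (hP a)]; linarith
      have h := phigh hx1 hm1 hs0 hs1
      calc s * (Q a * gg (Q a / P a)) - Q a * (s * hh m / (1-s))
          = Q a * (s * gg (Q a / P a) - s * hh m / (1-s)) := by ring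
        _ ≤ Q a * fd (Q a / P a / m) := mul_le_mul_of_nonneg_left h (hQ a).le
    have hsumH : s * ∑ a ∈ Hs, Q a * gg (Q a / P a) - (∑ a ∈ Hs, Q a) * (s * hh m / (1-s))
        ≤ ∑ a ∈ Hs, Q a * fd (Q a / P a / m) := by
      have := Finset.sum_le_sum hhigh
      rw [Finset.sum_sub_distrib, ← Finset.mul_sum, ← Finset.sum_mul] at this
      exact this
    have hpos1 : 0 ≤ s * hh m / (1-s) := div_nonneg (mul_nonneg hs0.le hhn) h1s.le
    have htransfer : (∑ a ∈ Hs, Q a) * (s * hh m / (1-s)) ≤ (1-s) * (s * hh m / (1-s)) :=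
      mul_le_mul_of_nonneg_right hQHle hpos1
    have hcancel : (1-s) * (s * hh m / (1-s)) = s * hh m := by
      field_simp
    have hLQhh : s * hh m ≤ (∑ a ∈ L, Q a) * hh m :=
      mul_le_mul_of_nonneg_right hQLs hhn
    have hfinal : s * ∑ a, Q a * gg (Q a / P a) ≤ ∑ a, Q a * fd (Q a / P a / m) := by
      rw [← hsplitG, ← hsplitFD, mul_add]
      nlinarith [hsumL, hsumH, htransfer, hLQhh, hcancel]
    rw [hkey] at hfinal
    linarith
  · -- H empty
    rw [Finset.not_nonempty_iff_eq_empty] at hHne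
    have hHz1 : ∑ a ∈ Hs, Q a * gg (Q a / P a) = 0 := by rw [hHne]; simp
    have hHz2 : ∑ a ∈ Hs, Q a * fd (Q a / P a / m) = 0 := by rw [hHne]; simp
    have hLQhh : 0 ≤ (∑ a ∈ L, Q a) * hh m :=
      mul_nonneg (by linarith) hhn
    have hfinal : s * ∑ a, Q a * gg (Q a / P a) ≤ ∑ a, Q a * fd (Q a / P a / m) := by
      rw [← hsplitG, ← hsplitFD, hHz1, hHz2, mul_add]
      nlinarith [hsumL, hLQhh]
    rw [hkey] at hfinal
    linarith


end RenyiTV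

theorem renyi_alpha_le_tv_zero_one {A : Type*} [Fintype A] [Nonempty A]
    (P Q : A → ℝ) (hP : ∀ a, 0 < P a) (hPsum : ∑ a, P a = 1)
    (hQ : ∀ a, 0 < Q a) (hQsum : ∑ a, Q a = 1)
    (α : ℝ) (hα : α ∈ Set.Ioo (0 : ℝ) 1) :
    (1 / (α - 1)) * Real.log (∑ a, P a ^ α * Q a ^ (1 - α)) ≤
      (α / (1 - α)) *
        (Real.log (1 + (∑ a, |P a - Q a|) ^ 2 / (2 * ⨅ a, P a)) -
          ((⨅ a, Q a) / 2) * (∑ a, |P a - Q a|) ^ 2) := by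
  classical
  obtain ⟨hα0, hα1⟩ := hα
  set ε : ℝ := ∑ a, |P a - Q a| with hεdef
  set pm : ℝ := ⨅ a, P a with hpmdef
  set qm : ℝ := ⨅ a, Q a with hqmdef
  set S : ℝ := ∑ a, P a ^ α * Q a ^ (1 - α) with hSdef
  set KL : ℝ := ∑ a, Q a * Real.log (Q a / P a) with hKLdef
  set m : ℝ := ∑ a, (Q a)^2/P a with hmdef
  -- infimum facts
  have hpm_le : ∀ a, pm ≤ P a := fun a => ciInf_le (Finite.bddBelow_range P) a
  have hqm_le : ∀ a, qm ≤ Q a := fun a => ciInf_le (Finite.bddBelow_range Q) a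
  obtain ⟨a₀, -, ha₀⟩ := Finset.exists_min_image Finset.univ P Finset.univ_nonempty
  have hpm_pos : 0 < pm := by
    have : P a₀ ≤ pm := le_ciInf (fun b => ha₀ b (Finset.mem_univ b))
    linarith [hP a₀]
  obtain ⟨b₀, -, hb₀⟩ := Finset.exists_min_image Finset.univ Q Finset.univ_nonempty
  have hqm_pos : 0 < qm := by
    have : Q b₀ ≤ qm := le_ciInf (fun b => hb₀ b (Finset.mem_univ b))
    linarith [hQ b₀]
  have hεnn : 0 ≤ ε := Finset.sum_nonneg (fun a _ => abs_nonneg _)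
  -- (a) sum of squares ≤ ε²/2
  have hparts : ∑ a, (P a - Q a)^2 ≤ ε^2/2 := by
    set r : A → ℝ := fun a => max (P a - Q a) 0 with hrdef
    set n : A → ℝ := fun a => max (Q a - P a) 0 with hndef
    have hrnn : ∀ a, 0 ≤ r a := fun a => le_max_right _ _
    have hnnn : ∀ a, 0 ≤ n a := fun a => le_max_right _ _
    have habs : ∀ a ∈ Finset.univ, |P a - Q a| = r a + n a := by
      intro a _
      rcases le_total (P a) (Q a) with h | h
      · rw [abs_of_nonpos (by linarith), hrdef, hndef]
        simp only
        rw [max_eq_right (by linarith : P a - Q a ≤ 0), max_eq_left (by linarith : (0:ℝ) ≤ Q a - P a)]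
        ring
      · rw [abs_of_nonneg (by linarith), hrdef, hndef]
        simp only
        rw [max_eq_left (by linarith : (0:ℝ) ≤ P a - Q a), max_eq_right (by linarith : Q a - P a ≤ 0)]
        ring
    have hsq : ∀ a ∈ Finset.univ, (P a - Q a)^2 = (r a)^2 + (n a)^2 := by
      intro a _
      rcases le_total (P a) (Q a) with h | h
      · rw [hrdef, hndef]; simp only
        rw [max_eq_right (by linarith : P a - Q a ≤ 0), max_eq_left (by linarith : (0:ℝ) ≤ Q a - P a)]
        ring
      · rw [hrdef, hndef]; simp only
        rw [max_eq_left (by linarith : (0:ℝ) ≤ P a - Q a), max_eq_right (by linarith : Q a - P a ≤ 0)]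
        ring
    have hdiff : ∀ a ∈ Finset.univ, P a - Q a = r a - n a := by
      intro a _
      rcases le_total (P a) (Q a) with h | h
      · rw [hrdef, hndef]; simp only
        rw [max_eq_right (by linarith : P a - Q a ≤ 0), max_eq_left (by linarith : (0:ℝ) ≤ Q a - P a)]
        ring
      · rw [hrdef, hndef]; simp only
        rw [max_eq_left (by linarith : (0:ℝ) ≤ P a - Q a), max_eq_right (by linarith : Q a - P a ≤ 0)]
        ring
    have hsum0 : ∑ a, (P a - Q a) = 0 := by
      rw [Finset.sum_sub_distrib, hPsum, hQsum]; ring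
    have hsumrn : ∑ a, r a - ∑ a, n a = 0 := by
      rw [← Finset.sum_sub_distrib, ← Finset.sum_congr rfl hdiff, hsum0]
    have hsumeps : ∑ a, r a + ∑ a, n a = ε := by
      rw [← Finset.sum_add_distrib, hεdef, Finset.sum_congr rfl habs]
    have hr2 : ∑ a, (r a)^2 ≤ (∑ a, r a)^2 :=
      Finset.sum_sq_le_sq_sum_of_nonneg (fun a _ => hrnn a)
    have hn2 : ∑ a, (n a)^2 ≤ (∑ a, n a)^2 :=
      Finset.sum_sq_le_sq_sum_of_nonneg (fun a _ => hnnn a)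
    have hrval : ∑ a, r a = ε/2 := by linarith
    have hnval : ∑ a, n a = ε/2 := by linarith
    calc ∑ a, (P a - Q a)^2 = ∑ a, ((r a)^2 + (n a)^2) := Finset.sum_congr rfl hsq
      _ = ∑ a, (r a)^2 + ∑ a, (n a)^2 := Finset.sum_add_distrib
      _ ≤ (∑ a, r a)^2 + (∑ a, n a)^2 := by linarith
      _ = ε^2/2 := by rw [hrval, hnval]; ring
  -- (b) ε² ≤ 2Δ
  have hCS : ε^2/2 ≤ ∑ a, (P a - Q a)^2/(P a + Q a) := by
    have h := Finset.sq_sum_div_le_sum_sq_div Finset.univ (fun a => |P a - Q a|)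
      (g := fun a => P a + Q a) (fun a _ => by simpa using add_pos (hP a) (hQ a))
    have hsum2 : ∑ a, (P a + Q a) = 2 := by
      rw [Finset.sum_add_distrib, hPsum, hQsum]; norm_num
    rw [hsum2] at h
    calc ε^2/2 ≤ ∑ a, |P a - Q a|^2/(P a + Q a) := h
      _ = ∑ a, (P a - Q a)^2/(P a + Q a) := by
          apply Finset.sum_congr rfl
          intro a _
          rw [sq_abs]
  -- (c) m ≤ 1 + ε²/(2 pm)
  have hm_eq : m = 1 + ∑ a, (Q a - P a)^2/P a := by
    have hid : ∀ a ∈ Finset.univ, (Q a - P a)^2/P a = (Q a)^2/P a - (2*Q a - P a) := by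
      intro a _
      have := (hP a).ne'
      field_simp
      ring
    rw [Finset.sum_congr rfl hid, Finset.sum_sub_distrib, Finset.sum_sub_distrib,
      ← Finset.mul_sum, hQsum, hPsum, hmdef]
    ring
  have hm1 : (1:ℝ) ≤ m := by
    rw [hm_eq]
    have : (0:ℝ) ≤ ∑ a, (Q a - P a)^2/P a :=
      Finset.sum_nonneg (fun a _ => div_nonneg (sq_nonneg _) (hP a).le)
    linarith
  have hm0 : (0:ℝ) < m := by linarith
  have hchi : m ≤ 1 + ε^2/(2*pm) := by
    rw [hm_eq]
    have h1 : ∑ a, (Q a - P a)^2/P a ≤ ∑ a, (Q a - P a)^2/pm := by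
      apply Finset.sum_le_sum
      intro a _
      exact div_le_div_of_nonneg_left (sq_nonneg _) hpm_pos (hpm_le a)
    have h2 : ∑ a, (Q a - P a)^2/pm = (∑ a, (Q a - P a)^2)/pm := by
      rw [← Finset.sum_div]
    have h3 : ∑ a, (Q a - P a)^2 = ∑ a, (P a - Q a)^2 := by
      apply Finset.sum_congr rfl; intro a _; ring
    have h4 : (∑ a, (P a - Q a)^2)/pm ≤ (ε^2/2)/pm :=
      (div_le_div_iff_of_pos_right hpm_pos).2 hparts
    have h5 : (ε^2/2)/pm = ε^2/(2*pm) := by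
      rw [div_div]
    have h23 : (∑ a, (Q a - P a)^2)/pm = (∑ a, (P a - Q a)^2)/pm := by rw [h3]
    linarith [h1, h2.le, h2.ge, h23.le, h23.ge, h4, h5.le, h5.ge]
  -- L2 : KL ≤ log(1+ε²/2pm) - (qm/2) ε²
  have hT := RenyiTV.claimT P Q hP hPsum hQ hQsum qm hqm_pos hqm_le
  rw [← hKLdef, ← hmdef] at hT
  have hlog_m : Real.log m ≤ Real.log (1 + ε^2/(2*pm)) :=
    Real.log_le_log hm0 hchi
  have hqmΔ : (qm/2)*ε^2 ≤ qm * ∑ a, (P a - Q a)^2/(P a + Q a) := by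
    have := mul_le_mul_of_nonneg_left hCS hqm_pos.le
    calc (qm/2)*ε^2 = qm * (ε^2/2) := by ring
      _ ≤ qm * ∑ a, (P a - Q a)^2/(P a + Q a) := this
  have hKL_le : KL ≤ Real.log (1 + ε^2/(2*pm)) - (qm/2)*ε^2 := by
    linarith
  -- AM-GM : -log S ≤ α KL
  have hSpos : 0 < S := by
    rw [hSdef]
    apply Finset.sum_pos (fun a _ => ?_) Finset.univ_nonempty
    exact mul_pos (Real.rpow_pos_of_pos (hP a) α) (Real.rpow_pos_of_pos (hQ a) (1-α))
  have hamgm : -Real.log S ≤ α * KL := by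
    have hrw : ∀ a ∈ Finset.univ, P a ^ α * Q a ^ (1-α) = Q a * (P a / Q a) ^ α := by
      intro a _
      rw [Real.div_rpow (hP a).le (hQ a).le, Real.rpow_sub (hQ a), Real.rpow_one]
      field_simp
    have hgm := Real.geom_mean_le_arith_mean_weighted Finset.univ Q
      (fun a => (P a / Q a) ^ α) (fun a _ => (hQ a).le) hQsum
      (fun a _ => Real.rpow_nonneg (div_nonneg (hP a).le (hQ a).le) α)
    have hprodval : ∏ a, ((P a / Q a) ^ α) ^ (Q a)
        = Real.exp (α * ∑ a, Q a * Real.log (P a / Q a)) := by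
      rw [Finset.mul_sum, Real.exp_sum]
      apply Finset.prod_congr rfl
      intro a _
      have hpq : 0 < P a / Q a := div_pos (hP a) (hQ a)
      rw [Real.rpow_def_of_pos (Real.rpow_pos_of_pos hpq α),
        Real.log_rpow hpq]
      ring_nf
    have hSe : ∑ a, Q a * (P a / Q a) ^ α = S := by
      rw [hSdef]
      exact (Finset.sum_congr rfl hrw).symm
    rw [hprodval, hSe] at hgm
    have h2 : α * ∑ a, Q a * Real.log (P a / Q a) ≤ Real.log S :=
      (Real.le_log_iff_exp_le hSpos).2 hgm
    have h3 : ∑ a, Q a * Real.log (P a / Q a) = -KL := by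
      rw [hKLdef, ← Finset.sum_neg_distrib]
      apply Finset.sum_congr rfl
      intro a _
      rw [show P a / Q a = (Q a / P a)⁻¹ by rw [inv_div], Real.log_inv]
      ring
    rw [h3] at h2
    linarith
  -- final algebra
  have hKLα : -Real.log S ≤ α * (Real.log (1 + ε^2/(2*pm)) - (qm/2)*ε^2) := by
    calc -Real.log S ≤ α * KL := hamgm
      _ ≤ α * (Real.log (1 + ε^2/(2*pm)) - (qm/2)*ε^2) :=
          mul_le_mul_of_nonneg_left hKL_le hα0.le
  have h1α : (0:ℝ) < 1 - α := by linarith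
  have hα1' : α - 1 ≠ 0 := sub_ne_zero.mpr (ne_of_lt hα1)
  have hident : (α/(1-α)) * (Real.log (1 + ε^2/(2*pm)) - (qm/2)*ε^2)
      - (1/(α-1)) * Real.log S
      = (α * (Real.log (1 + ε^2/(2*pm)) - (qm/2)*ε^2) + Real.log S)/(1-α) := by
    field_simp
    ring
  have hnn : 0 ≤ (α * (Real.log (1 + ε^2/(2*pm)) - (qm/2)*ε^2) + Real.log S)/(1-α) :=
    div_nonneg (by linarith) h1α.le
  linarith [hident, hnn]
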